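/- Fix a triangle Δ = abc in ℝ³ with a, b, c not collinear, and fix two distinct points p, q ∈ ℝ³. The locus γ_{pq} of all points r ∈ ℝ³ such that the triangle pqr is (directly) similar to Δ, with p, q, r corresponding to a, b, c respectively, is a circle whose axis (the line through its center perpendicular to its supporting plane) passes through p and q. -/

import Mathlib

noncomputable section

abbrev E3 := EuclideanSpace ℝ (Fin 3)

/-- The locus of apices `r` such that triangle `pqr` is similar to the triangle `abc`,
with the correspondence `(p,q,r) ↔ (a,b,c)`: corresponding side lengths are proportional. -/
def simLocus (a b c p q : E3) : Set E3 :=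
  {r | dist p q / dist a b = dist q r / dist b c ∧ dist p q / dist a b = dist r p / dist c a}

lemma strict_tri {a b c : E3} (h : ¬ Collinear ℝ ({a, b, c} : Set E3)) :
    dist a c < dist a b + dist b c := by
  rcases lt_or_eq_of_le (dist_triangle a b c) with h' | h'
  · linarith
  · exact absurd (dist_add_dist_eq_iff.mp h'.symm).collinear h

lemma col_perm {a b c : E3} (h : ¬ Collinear ℝ ({a, b, c} : Set E3)) :
    ¬ Collinear ℝ ({b, c, a} : Set E3) := by
  have : ({b, c, a} : Set E3) = {a, b, c} := by
    ext x; simp; tauto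
  rwa [this]

lemma ne_of_noncol {a b c : E3} (h : ¬ Collinear ℝ ({a, b, c} : Set E3)) : a ≠ b := by
  rintro rfl
  exact h (by simpa using (collinear_pair ℝ a c))

set_option maxHeartbeats 2000000 in
/-- For a nondegenerate triangle `abc` and distinct points `p ≠ q`, the locus of points `r`
with triangle `pqr` similar to `abc` is a circle whose axis (the line through its center
orthogonal to its supporting plane) passes through `p` and `q`: there are a center `o` on
the line through `p` and `q` and a radius `ρ > 0` such that the locus is the circle of
radius `ρ` about `o` in the plane through `o` orthogonal to `q - p`. -/
theorem simLocus_is_circle_with_axis_pq (a b c p q : E3)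
    (hΔ : ¬ Collinear ℝ ({a, b, c} : Set E3)) (hpq : p ≠ q) :
    ∃ (o : E3) (ρ t : ℝ), 0 < ρ ∧ o = p + t • (q - p) ∧
      simLocus a b c p q = {r | dist r o = ρ ∧ (inner ℝ (r - o) (q - p) : ℝ) = 0} := by
  -- distances in triangle abc
  set A := dist a b with hA
  set B := dist b c with hB
  set C := dist c a with hC
  have hΔ' := col_perm hΔ
  have hΔ'' := col_perm hΔ'
  have hab : a ≠ b := ne_of_noncol hΔ
  have hbc : b ≠ c := ne_of_noncol hΔ'
  have hca : c ≠ a := ne_of_noncol hΔ''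
  have hA0 : 0 < A := dist_pos.mpr hab
  have hB0 : 0 < B := dist_pos.mpr hbc
  have hC0 : 0 < C := dist_pos.mpr hca
  -- strict triangle inequalities
  have t1 : C < A + B := by
    have := strict_tri hΔ; rwa [dist_comm a c] at this
  have t2 : A < B + C := by
    have := strict_tri hΔ'; rwa [dist_comm b a] at this
  have t3 : B < C + A := by
    have := strict_tri hΔ''; rwa [dist_comm c b] at this
  set d := dist p q with hd
  have hd0 : 0 < d := dist_pos.mpr hpq
  set k := d / A with hk
  have hk0 : 0 < k := div_pos hd0 hA0
  set R1 := k * B with hR1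
  set R2 := k * C with hR2
  have hR10 : 0 < R1 := mul_pos hk0 hB0
  have hR20 : 0 < R2 := mul_pos hk0 hC0
  have hdk : d = k * A := by rw [hk]; field_simp [hA0.ne']
  set D := d ^ 2 with hD
  have hD0 : 0 < D := by positivity
  set t := (D + R2 ^ 2 - R1 ^ 2) / (2 * D) with ht
  have hrr : 0 < R2 ^ 2 - t ^ 2 * D := by
    have key : (R2 ^ 2 - t ^ 2 * D) * (4 * D) =
        (R1 + R2 - d) * (R1 + d - R2) * (d + R2 - R1) * (d + R2 + R1) := by
      rw [ht]; field_simp; ring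
    have h1 : 0 < R1 + R2 - d := by rw [hdk, hR1, hR2]; nlinarith
    have h2 : 0 < R1 + d - R2 := by rw [hdk, hR1, hR2]; nlinarith
    have h3 : 0 < d + R2 - R1 := by rw [hdk, hR1, hR2]; nlinarith
    have h4 : 0 < d + R2 + R1 := by linarith
    nlinarith [mul_pos (mul_pos (mul_pos h1 h2) h3) h4]
  set ρ := Real.sqrt (R2 ^ 2 - t ^ 2 * D) with hρ
  have hρ0 : 0 < ρ := Real.sqrt_pos.mpr hrr
  have hρsq : ρ ^ 2 = R2 ^ 2 - t ^ 2 * D := Real.sq_sqrt hrr.le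
  set v : E3 := q - p with hv
  set o : E3 := p + t • v with ho
  clear_value A B C d k R1 R2 D t ρ v o
  refine ⟨o, ρ, t, hρ0, by rw [ho, hv], ?_⟩
  have hvn : ‖v‖ ^ 2 = D := by
    rw [hD, hd, dist_eq_norm, hv, ← norm_neg]; congr 1; abel_nf
  ext r
  simp only [simLocus, Set.mem_setOf_eq, ← hd, ← hA, ← hB, ← hC, ← hv]
  -- membership in simLocus iff dist q r = R1 and dist r p = R2
  have hmem : (d / A = dist q r / B ∧ d / A = dist r p / C) ↔
      (dist q r = R1 ∧ dist r p = R2) := by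
    rw [hR1, hR2, hk]
    constructor
    · rintro ⟨h1, h2⟩
      constructor
      · field_simp at h1 ⊢; linarith
      · field_simp at h2 ⊢; linarith
    · rintro ⟨h1, h2⟩
      constructor
      · rw [h1]; field_simp
      · rw [h2]; field_simp
  rw [hmem]
  -- decompositions
  have hrp : r - p = (r - o) + t • v := by rw [ho]; abel_nf
  have hrq : r - q = (r - o) + (t - 1) • v := by
    rw [ho, hv, sub_smul, one_smul]; abel_nf
  have exp_p : dist r p ^ 2 = ‖r - o‖ ^ 2 + 2 * t * inner ℝ (r - o) v + t ^ 2 * D := by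
    rw [dist_eq_norm, hrp, norm_add_sq_real, real_inner_smul_right, norm_smul,
      ← hvn, mul_pow, Real.norm_eq_abs, sq_abs]
    ring
  have exp_q : dist q r ^ 2 = ‖r - o‖ ^ 2 + 2 * (t - 1) * inner ℝ (r - o) v
      + (t - 1) ^ 2 * D := by
    rw [dist_comm, dist_eq_norm, hrq, norm_add_sq_real, real_inner_smul_right, norm_smul,
      ← hvn, mul_pow, Real.norm_eq_abs, sq_abs]
    ring
  have htD : (2 * t - 1) * D = R2 ^ 2 - R1 ^ 2 - D + D := by
    rw [ht]; field_simp; ring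
  constructor
  · rintro ⟨h1, h2⟩
    have e1 : dist q r ^ 2 = R1 ^ 2 := by rw [h1]
    have e2 : dist r p ^ 2 = R2 ^ 2 := by rw [h2]
    rw [exp_q] at e1
    rw [exp_p] at e2
    have hinner : (inner ℝ (r - o) v : ℝ) = 0 := by linear_combination (e2 - e1 - htD) / 2
    have hnorm : ‖r - o‖ ^ 2 = ρ ^ 2 := by
      rw [hρsq]; linear_combination e2 - 2 * t * hinner
    constructor
    · rw [dist_eq_norm, ← Real.sqrt_sq (norm_nonneg (r - o)), hnorm,
        Real.sqrt_sq hρ0.le]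
    · exact hinner
  · rintro ⟨h1, h2⟩
    have hnorm : ‖r - o‖ ^ 2 = ρ ^ 2 := by rw [← dist_eq_norm, h1]
    have e2 : dist r p ^ 2 = R2 ^ 2 := by
      rw [exp_p, h2, hnorm, hρsq]; ring
    have e1 : dist q r ^ 2 = R1 ^ 2 := by
      rw [exp_q, h2, hnorm, hρsq]; linear_combination -htD
    constructor
    · rw [← Real.sqrt_sq (dist_nonneg (x := q) (y := r)), e1, Real.sqrt_sq hR10.le]
    · rw [← Real.sqrt_sq (dist_nonneg (x := r) (y := p)), e2, Real.sqrt_sq hR20.le]
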